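/- Let V be an F-vector space, 𝓛 a series in V, 𝓑 an 𝓛-adapted basis of V, and {W_λ/U_λ : λ ∈ Λ} a family of sections of 𝓛 (U_λ, W_λ ∈ 𝓛, U_λ < W_λ) that are pairwise 'disjoint' in the sense that for distinct α, β either W_β ≤ U_α or W_α ≤ U_β. Suppose for each λ we are given h_λ in the stability group of the series induced by 𝓛 on W_λ/U_λ. Then there exists h in the stability group S(𝓛) of 𝓛 such that for every λ, the map induced by h on W_λ/U_λ equals h_λ. -/

import Mathlib

section Defs

variable {F V : Type*} [Field F] [AddCommGroup V] [Module F V]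

/-- A *series* in a vector space `V`. -/
def IsSeries (𝓛 : Set (Submodule F V)) : Prop :=
  ⊥ ∈ 𝓛 ∧ ⊤ ∈ 𝓛 ∧ IsChain (· ≤ ·) 𝓛 ∧
    ∀ 𝓕 : Set (Submodule F V), 𝓕 ⊆ 𝓛 → 𝓕.Nonempty → sInf 𝓕 ∈ 𝓛 ∧ sSup 𝓕 ∈ 𝓛

/-- `(B, T)` is a *jump* of the series `𝓛`. -/
def IsJump (𝓛 : Set (Submodule F V)) (B T : Submodule F V) : Prop :=
  B ∈ 𝓛 ∧ T ∈ 𝓛 ∧ B < T ∧ ∀ U ∈ 𝓛, B ≤ U → U ≤ T → U = B ∨ U = T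

/-- The *stability group* `S(𝓛)` of a series `𝓛`. -/
def stab (𝓛 : Set (Submodule F V)) : Set (V ≃ₗ[F] V) :=
  {g | ∀ B T : Submodule F V, IsJump 𝓛 B T → ∀ x ∈ T, g x - x ∈ B}

/-- The series induced by `𝓛` on the section `W/U` (realized as
`↥W ⧸ U.comap W.subtype`). -/
def inducedSeries (𝓛 : Set (Submodule F V)) (U W : Submodule F V) :
    Set (Submodule F (↥W ⧸ U.comap W.subtype)) :=
  {Y | ∃ X ∈ 𝓛, U ≤ X ∧ X ≤ W ∧
    Y = (X.comap W.subtype).map (U.comap W.subtype).mkQ}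

end Defs

section Aux

open Submodule

namespace Stmt12Aux

variable {F V : Type*} [Field F] [AddCommGroup V] [Module F V]

variable (𝓛 : Set (Submodule F V))

/-- The bottom of the jump determined by a nonzero vector `x`. -/
noncomputable def jB (x : V) : Submodule F V := sSup {X | X ∈ 𝓛 ∧ x ∉ X}

/-- The top of the jump determined by a nonzero vector `x`. -/
noncomputable def jT (x : V) : Submodule F V := sInf {X | X ∈ 𝓛 ∧ x ∈ X}

variable {𝓛}

lemma jT_mem (hser : IsSeries 𝓛) (x : V) : jT 𝓛 x ∈ 𝓛 :=
  (hser.2.2.2 {X | X ∈ 𝓛 ∧ x ∈ X} (fun _ hX => hX.1) ⟨⊤, hser.2.1, Submodule.mem_top⟩).1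

lemma mem_jT (x : V) : x ∈ jT 𝓛 x := Submodule.mem_sInf.2 fun _ hp => hp.2

lemma jT_le {X : Submodule F V} (hX : X ∈ 𝓛) {x : V} (hxX : x ∈ X) : jT 𝓛 x ≤ X :=
  sInf_le ⟨hX, hxX⟩

lemma jB_mem (hser : IsSeries 𝓛) {x : V} (hx : x ≠ 0) : jB 𝓛 x ∈ 𝓛 :=
  (hser.2.2.2 {X | X ∈ 𝓛 ∧ x ∉ X} (fun _ hX => hX.1) ⟨⊥, hser.1, by simpa using hx⟩).2

lemma le_jB {X : Submodule F V} (hX : X ∈ 𝓛) {x : V} (h : x ∉ X) : X ≤ jB 𝓛 x :=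
  le_sSup ⟨hX, h⟩

lemma not_mem_jB (hser : IsSeries 𝓛) {x : V} (hx : x ≠ 0) : x ∉ jB 𝓛 x := by
  intro hmem
  have hch : IsChain (· ≤ ·) {X | X ∈ 𝓛 ∧ x ∉ X} := hser.2.2.1.mono (fun _ hX => hX.1)
  rcases (Submodule.mem_sSup_of_directed (⟨⊥, hser.1, by simpa using hx⟩ :
      Set.Nonempty {X | X ∈ 𝓛 ∧ x ∉ X}) hch.directedOn).1 hmem with ⟨Y, hY, hxY⟩
  exact hY.2 hxY

lemma jB_lt_jT (hser : IsSeries 𝓛) {x : V} (hx : x ≠ 0) : jB 𝓛 x < jT 𝓛 x := by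
  have hle : jB 𝓛 x ≤ jT 𝓛 x := sSup_le (fun X hX => by
    rcases hser.2.2.1.total hX.1 (jT_mem hser x) with h | h
    · exact h
    · exact absurd (h (mem_jT x)) hX.2)
  exact lt_of_le_of_ne hle (fun h => not_mem_jB hser hx (h ▸ mem_jT x))

lemma isJump_jx (hser : IsSeries 𝓛) {x : V} (hx : x ≠ 0) :
    IsJump 𝓛 (jB 𝓛 x) (jT 𝓛 x) :=
  ⟨jB_mem hser hx, jT_mem hser x, jB_lt_jT hser hx, fun Y hY h1 h2 => by
    by_cases hxY : x ∈ Y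
    · exact Or.inr (le_antisymm h2 (jT_le hY hxY))
    · exact Or.inl (le_antisymm (le_jB hY hxY) h1)⟩

lemma jump_bot_unique (hser : IsSeries 𝓛) {B1 B2 T : Submodule F V}
    (h1 : IsJump 𝓛 B1 T) (h2 : IsJump 𝓛 B2 T) : B1 = B2 := by
  rcases hser.2.2.1.total h1.1 h2.1 with hB | hB
  · rcases h1.2.2.2 B2 h2.1 hB h2.2.2.1.le with hE | hE
    · exact hE.symm
    · exact absurd hE h2.2.2.1.ne
  · rcases h2.2.2.2 B1 h1.1 hB h1.2.2.1.le with hE | hE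
    · exact hE
    · exact absurd hE h1.2.2.1.ne

lemma jump_cmp_aux (hser : IsSeries 𝓛) {B1 T1 B2 T2 : Submodule F V}
    (h1 : IsJump 𝓛 B1 T1) (h2 : IsJump 𝓛 B2 T2) (hT : T1 ≤ T2) :
    (B1 = B2 ∧ T1 = T2) ∨ T1 ≤ B2 ∨ T2 ≤ B1 := by
  rcases hser.2.2.1.total h2.1 h1.2.1 with hBT | hTB
  · rcases h2.2.2.2 T1 h1.2.1 hBT hT with hE | hE
    · exact Or.inr (Or.inl hE.le)
    · exact Or.inl ⟨jump_bot_unique hser h1 (hE ▸ h2), hE⟩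
  · exact Or.inr (Or.inl hTB)

lemma jump_cmp (hser : IsSeries 𝓛) {B1 T1 B2 T2 : Submodule F V}
    (h1 : IsJump 𝓛 B1 T1) (h2 : IsJump 𝓛 B2 T2) :
    (B1 = B2 ∧ T1 = T2) ∨ T1 ≤ B2 ∨ T2 ≤ B1 := by
  rcases hser.2.2.1.total h1.2.1 h2.2.1 with hT | hT
  · exact jump_cmp_aux hser h1 h2 hT
  · rcases jump_cmp_aux hser h2 h1 hT with ⟨hB, hT'⟩ | hle | hle
    · exact Or.inl ⟨hB.symm, hT'.symm⟩
    · exact Or.inr (Or.inr hle)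
    · exact Or.inr (Or.inl hle)

/-- Support of an element of a member of the series, w.r.t. an adapted basis,
lies in that member. -/
lemma support_subset (hser : IsSeries 𝓛) {ℬ : Set V} (b : Module.Basis ℬ F V)
    (hb : ∀ v : ℬ, (b v : V) = ↑v)
    (hadaptLI : ∀ B T : Submodule F V, IsJump 𝓛 B T →
      LinearIndependent F (fun y : ↥(ℬ ∩ ((T : Set V) \ (B : Set V))) => B.mkQ (y : V)))
    {X : Submodule F V} (hX : X ∈ 𝓛) {x : V} (hxX : x ∈ X) :
    ∀ v ∈ (b.repr x).support, (v : V) ∈ X := by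
  classical
  by_contra hcon
  push_neg at hcon
  obtain ⟨v, hv, hvX⟩ := hcon
  have hbne : ∀ w : ℬ, (w : V) ≠ 0 := fun w => by
    have := b.ne_zero w; rwa [hb w] at this
  set Sb := (b.repr x).support.filter (fun w : ℬ => (w : V) ∉ X) with hSb
  have hvSb : v ∈ Sb := Finset.mem_filter.2 ⟨hv, hvX⟩
  obtain ⟨Tm, hTmmem, hTmmax⟩ := Finset.exists_maximal
    (s := Sb.image fun w : ℬ => jT 𝓛 (w : V)) ⟨_, Finset.mem_image_of_mem _ hvSb⟩
  obtain ⟨v0, hv0Sb, hv0T⟩ := Finset.mem_image.1 hTmmem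
  have hv0X : (v0 : V) ∉ X := (Finset.mem_filter.1 hv0Sb).2
  have hjump : IsJump 𝓛 (jB 𝓛 (v0 : V)) (jT 𝓛 (v0 : V)) := isJump_jx hser (hbne v0)
  have hXB : X ≤ jB 𝓛 (v0 : V) := le_jB hX hv0X
  have hmax : ∀ w : ℬ, w ∈ Sb → jT 𝓛 (w : V) ≤ jT 𝓛 (v0 : V) := by
    intro w hw
    have hmem' : jT 𝓛 (w : V) ∈ Sb.image fun w : ℬ => jT 𝓛 (w : V) :=
      Finset.mem_image_of_mem _ hw
    rcases hser.2.2.1.total (jT_mem hser (w : V)) (jT_mem hser (v0 : V)) with hc | hc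
    · exact hc
    · have hnlt : ¬ jT 𝓛 (v0 : V) < jT 𝓛 (w : V) := by
        rw [hv0T]; exact fun hlt => (lt_irrefl _) (hlt.trans_le (hTmmax hmem' hlt.le))
      exact (hc.lt_or_eq.resolve_left hnlt).ge
  set Sg := Sb.filter (fun w : ℬ => jT 𝓛 (w : V) = jT 𝓛 (v0 : V)) with hSg
  have hv0Sg : v0 ∈ Sg := Finset.mem_filter.2 ⟨hv0Sb, rfl⟩
  have hclass : ∀ w : ℬ, w ∈ (b.repr x).support → w ∉ Sg → (w : V) ∈ jB 𝓛 (v0 : V) := by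
    intro w hw hwSg
    by_cases hwSb : w ∈ Sb
    · have hwT : jT 𝓛 (w : V) ≠ jT 𝓛 (v0 : V) := fun hE =>
        hwSg (Finset.mem_filter.2 ⟨hwSb, hE⟩)
      have hj2 : IsJump 𝓛 (jB 𝓛 (w : V)) (jT 𝓛 (w : V)) := isJump_jx hser (hbne w)
      rcases jump_cmp hser hj2 hjump with ⟨_, hT'⟩ | hle | hle
      · exact absurd hT' hwT
      · exact hle (mem_jT _)
      · exact absurd (lt_of_le_of_lt (hmax w hwSb)
          (lt_of_le_of_lt hle (jB_lt_jT hser (hbne w)))) (lt_irrefl _)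
    · have hwX : (w : V) ∈ X := by
        by_contra hc'; exact hwSb (Finset.mem_filter.2 ⟨hw, hc'⟩)
      exact hXB hwX
  have hmemTB : ∀ w : ℬ, w ∈ Sg →
      (w : V) ∈ ℬ ∩ (((jT 𝓛 (v0 : V)) : Set V) \ ((jB 𝓛 (v0 : V)) : Set V)) := by
    intro w hw
    obtain ⟨hwSb, hwT⟩ := Finset.mem_filter.1 hw
    have hj2 : IsJump 𝓛 (jB 𝓛 (w : V)) (jT 𝓛 (w : V)) := isJump_jx hser (hbne w)
    have hBw : jB 𝓛 (w : V) = jB 𝓛 (v0 : V) :=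
      jump_bot_unique hser (hwT ▸ hj2) hjump
    exact ⟨w.2, hwT ▸ mem_jT (w : V), hBw ▸ not_mem_jB hser (hbne w)⟩
  have hx0 : (jB 𝓛 (v0 : V)).mkQ x = 0 := by
    rw [Submodule.mkQ_apply, Submodule.Quotient.mk_eq_zero]
    exact hXB hxX
  have hsum0 : ∑ w ∈ (b.repr x).support,
      (b.repr x) w • (jB 𝓛 (v0 : V)).mkQ (w : V) = 0 := by
    have hmk : (jB 𝓛 (v0 : V)).mkQ x = ∑ w ∈ (b.repr x).support,
        (b.repr x) w • (jB 𝓛 (v0 : V)).mkQ (w : V) := by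
      conv_lhs => rw [← b.linearCombination_repr x]
      rw [Finsupp.linearCombination_apply, Finsupp.sum, map_sum]
      exact Finset.sum_congr rfl fun w _ => by rw [map_smul, hb w]
    rw [← hmk, hx0]
  have hsub : Sg ⊆ (b.repr x).support :=
    (Finset.filter_subset _ _).trans (Finset.filter_subset _ _)
  have hsum1 : ∑ w ∈ Sg, (b.repr x) w • (jB 𝓛 (v0 : V)).mkQ (w : V) = 0 := by
    rw [Finset.sum_subset hsub (fun w hw hwSg => by
      rw [Submodule.mkQ_apply, (Submodule.Quotient.mk_eq_zero _).2 (hclass w hw hwSg),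
        smul_zero])]
    exact hsum0
  let f : {w // w ∈ Sg} → ↥(ℬ ∩ (((jT 𝓛 (v0 : V)) : Set V) \ ((jB 𝓛 (v0 : V)) : Set V))) :=
    fun w => ⟨(w.1 : V), hmemTB w.1 w.2⟩
  let gg : ↥(ℬ ∩ (((jT 𝓛 (v0 : V)) : Set V) \ ((jB 𝓛 (v0 : V)) : Set V))) → F :=
    fun u => if hu : (u : V) ∈ ℬ then b.repr x ⟨(u : V), hu⟩ else 0
  have hinj : ∀ w1 ∈ Sg.attach, ∀ w2 ∈ Sg.attach, f w1 = f w2 → w1 = w2 := by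
    intro w1 _ w2 _ hE
    have hval := congrArg (fun u : ↥(ℬ ∩ (((jT 𝓛 (v0 : V)) : Set V) \ ((jB 𝓛 (v0 : V)) : Set V))) => (u : V)) hE
    exact Subtype.ext (Subtype.ext hval)
  have hgg : ∀ w : {w // w ∈ Sg}, gg (f w) = b.repr x w.1 := by
    intro w
    show (if hu : ((f w : V)) ∈ ℬ then b.repr x ⟨(f w : V), hu⟩ else 0) = b.repr x w.1
    rw [dif_pos (hmemTB w.1 w.2).1]
  have hsum2 : ∑ u ∈ Sg.attach.image f,
      gg u • (jB 𝓛 (v0 : V)).mkQ (u : V) = 0 := by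
    rw [Finset.sum_image hinj]
    calc ∑ w ∈ Sg.attach, gg (f w) • (jB 𝓛 (v0 : V)).mkQ ((f w : V))
        = ∑ w ∈ Sg.attach, (b.repr x) w.1 • (jB 𝓛 (v0 : V)).mkQ (w.1 : V) :=
          Finset.sum_congr rfl (fun w _ => by rw [hgg w])
      _ = ∑ w ∈ Sg, (b.repr x) w • (jB 𝓛 (v0 : V)).mkQ (w : V) :=
          Finset.sum_attach Sg fun w => (b.repr x) w • (jB 𝓛 (v0 : V)).mkQ (w : V)
      _ = 0 := hsum1
  have hkey := linearIndependent_iff'.1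
    (hadaptLI (jB 𝓛 (v0 : V)) (jT 𝓛 (v0 : V)) hjump) _ gg hsum2
    (f ⟨v0, hv0Sg⟩) (Finset.mem_image_of_mem f (Finset.mem_attach _ _))
  rw [hgg ⟨v0, hv0Sg⟩] at hkey
  exact Finsupp.mem_support_iff.1 ((Finset.mem_filter.1 hv0Sb).1) hkey

lemma le_span_inter (hser : IsSeries 𝓛) {ℬ : Set V} (b : Module.Basis ℬ F V)
    (hb : ∀ v : ℬ, (b v : V) = ↑v)
    (hadaptLI : ∀ B T : Submodule F V, IsJump 𝓛 B T →
      LinearIndependent F (fun y : ↥(ℬ ∩ ((T : Set V) \ (B : Set V))) => B.mkQ (y : V)))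
    {X : Submodule F V} (hX : X ∈ 𝓛) : X ≤ Submodule.span F (ℬ ∩ X) := by
  intro x hx
  refine Submodule.span_mono ?_ (b.mem_span_repr_support x)
  rintro y ⟨w, hw, rfl⟩
  rw [hb w]
  exact ⟨w.2, support_subset hser b hb hadaptLI hX hx w hw⟩

lemma support_subset_span {ℬ : Set V} (b : Module.Basis ℬ F V)
    (hb : ∀ v : ℬ, (b v : V) = ↑v) {A : Set V} {x : V}
    (hx : x ∈ Submodule.span F (ℬ ∩ A)) :
    ∀ v ∈ (b.repr x).support, (v : V) ∈ A := by
  have himg : ℬ ∩ A = ⇑b '' {w : ℬ | (w : V) ∈ A} := by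
    ext y; constructor
    · rintro ⟨hyB, hyA⟩; exact ⟨⟨y, hyB⟩, hyA, hb _⟩
    · rintro ⟨w, hw, rfl⟩
      rw [hb w]; exact ⟨w.2, hw⟩
  rw [himg] at hx
  intro v hv
  exact (Module.Basis.mem_span_image b).1 hx hv

lemma induced_jump (hser : IsSeries 𝓛) {Ul Wl B T : Submodule F V}
    (hj : IsJump 𝓛 B T) (hUB : Ul ≤ B) (hTW : T ≤ Wl) :
    IsJump (inducedSeries 𝓛 Ul Wl)
      ((B.comap Wl.subtype).map (Ul.comap Wl.subtype).mkQ)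
      ((T.comap Wl.subtype).map (Ul.comap Wl.subtype).mkQ) := by
  have hBW : B ≤ Wl := hj.2.2.1.le.trans hTW
  refine ⟨⟨B, hj.1, hUB, hBW, rfl⟩, ⟨T, hj.2.1, hUB.trans hj.2.2.1.le, hTW, rfl⟩, ?_, ?_⟩
  · obtain ⟨z, hzT, hzB⟩ := SetLike.exists_of_lt hj.2.2.1
    refine lt_of_le_of_ne (Submodule.map_mono (Submodule.comap_mono hj.2.2.1.le)) ?_
    intro hEq
    have hzmem : (Ul.comap Wl.subtype).mkQ ⟨z, hTW hzT⟩ ∈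
        (T.comap Wl.subtype).map (Ul.comap Wl.subtype).mkQ :=
      Submodule.mem_map_of_mem (by simpa using hzT)
    rw [← hEq] at hzmem
    obtain ⟨y, hy, hyE⟩ := hzmem
    have hsub : (⟨z, hTW hzT⟩ : ↥Wl) - y ∈ Ul.comap Wl.subtype := by
      rw [Submodule.mkQ_apply, Submodule.mkQ_apply] at hyE
      exact (Submodule.Quotient.eq _).1 hyE.symm
    have hz2 : z - (y : V) ∈ Ul := by simpa using hsub
    have hyB : (y : V) ∈ B := by simpa using hy
    have : z ∈ B := by
      have := add_mem (hUB hz2) hyB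
      simpa using this
    exact hzB this
  · rintro Y ⟨X, hX, hUX, hXW, rfl⟩ h1 h2
    rcases hser.2.2.1.total hX hj.1 with hc | hc
    · exact Or.inl (le_antisymm (Submodule.map_mono (Submodule.comap_mono hc)) h1)
    · rcases hser.2.2.1.total hX hj.2.1 with hc2 | hc2
      · rcases hj.2.2.2 X hX hc hc2 with rfl | rfl
        · exact Or.inl rfl
        · exact Or.inr rfl
      · exact Or.inr (le_antisymm h2 (Submodule.map_mono (Submodule.comap_mono hc2)))

end Stmt12Aux

end Aux
open Submodule Stmt12Aux in
/-- Let `𝓑` be an `𝓛`-adapted basis of `V` and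
`{W_λ/U_λ : λ ∈ Λ}` a family of pairwise disjoint sections of `𝓛`.  Given, for
each `λ`, an element `h_λ` of the stability group of the series induced by `𝓛`
on `W_λ/U_λ`, there exists `h ∈ S(𝓛)` inducing `h_λ` on `W_λ/U_λ` for every `λ`. -/
theorem stmt12 {F V : Type*} [Field F] [AddCommGroup V] [Module F V]
    (𝓛 : Set (Submodule F V)) (hser : IsSeries 𝓛)
    (ℬ : Set V)
    (hindep : LinearIndependent F (fun v : ℬ => (v : V)))
    (hspan : Submodule.span F ℬ = ⊤)
    (hadapt : ∀ B T : Submodule F V, IsJump 𝓛 B T →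
      LinearIndependent F
        (fun x : ↥(ℬ ∩ ((T : Set V) \ (B : Set V))) => B.mkQ (x : V)) ∧
      Submodule.span F (B.mkQ '' (ℬ ∩ ((T : Set V) \ (B : Set V))))
        = T.map B.mkQ)
    {Λ : Type*} (U W : Λ → Submodule F V)
    (hU : ∀ l, U l ∈ 𝓛) (hW : ∀ l, W l ∈ 𝓛) (hUW : ∀ l, U l < W l)
    (hdisj : ∀ a b : Λ, a ≠ b → W b ≤ U a ∨ W a ≤ U b)
    (h : ∀ l : Λ,
      (↥(W l) ⧸ (U l).comap (W l).subtype) ≃ₗ[F]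
        (↥(W l) ⧸ (U l).comap (W l).subtype))
    (hstab : ∀ l : Λ, h l ∈ stab (inducedSeries 𝓛 (U l) (W l))) :
    ∃ g : V ≃ₗ[F] V, g ∈ stab 𝓛 ∧
      ∀ l : Λ,
        (∀ x ∈ W l, g x ∈ W l) ∧ (∀ x ∈ U l, g x ∈ U l) ∧
        ∀ (x : ↥(W l)) (hx : g (x : V) ∈ W l),
          (h l) (Submodule.Quotient.mk x) =
            Submodule.Quotient.mk (⟨g (x : V), hx⟩ : ↥(W l)) := by
  classical
  have hsp : ⊤ ≤ span F (Set.range fun v : ℬ => (v : V)) := by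
    rw [Subtype.range_coe]; exact hspan.ge
  let b : Module.Basis ℬ F V := Module.Basis.mk hindep hsp
  have hb : ∀ v : ℬ, (b v : V) = ↑v := fun v => Module.Basis.mk_apply hindep hsp v
  have hadaptLI : ∀ B T : Submodule F V, IsJump 𝓛 B T →
      LinearIndependent F (fun y : ↥(ℬ ∩ ((T : Set V) \ (B : Set V))) => B.mkQ (y : V)) :=
    fun B T hj => (hadapt B T hj).1
  have hbne : ∀ v : ℬ, (v : V) ≠ 0 := fun v => by
    have := b.ne_zero v; rwa [hb v] at this
  have hsupp : ∀ {X : Submodule F V}, X ∈ 𝓛 → ∀ {x : V}, x ∈ X →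
      ∀ v ∈ (b.repr x).support, (v : V) ∈ X :=
    fun {X} hX {x} hxX => support_subset hser b hb hadaptLI hX hxX
  -- uniqueness of the section containing a vector
  have huniq : ∀ (a c : Λ) (x : V), x ∈ W a → x ∉ U a → x ∈ W c → x ∉ U c → a = c := by
    intro a c x h1 h2 h3 h4
    by_contra hne
    rcases hdisj a c hne with hle | hle
    · exact h2 (hle h3)
    · exact h4 (hle h1)
  -- the section subspaces
  have hVlW : ∀ l, span F (ℬ ∩ ((W l : Set V) \ (U l : Set V))) ≤ W l :=
    fun l => span_le.2 (fun y hy => hy.2.1)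
  -- lifting along the quotient, with lifts inside the section subspace
  have hsur : ∀ (l : Λ) (q : ↥(W l) ⧸ (U l).comap (W l).subtype),
      ∃ u : V, u ∈ span F (ℬ ∩ ((W l : Set V) \ (U l : Set V))) ∧
        ∀ (hu : u ∈ W l), ((U l).comap (W l).subtype).mkQ ⟨u, hu⟩ = q := by
    intro l q
    obtain ⟨z, rfl⟩ := Submodule.mkQ_surjective _ q
    have hWle : span F (ℬ ∩ (W l : Set V)) ≤ W l :=
      Submodule.span_le.2 fun y hy => hy.2
    have main : ∀ (y : V), y ∈ span F (ℬ ∩ (W l : Set V)) →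
        ∃ u : V, u ∈ span F (ℬ ∩ ((W l : Set V) \ (U l : Set V))) ∧
          ∀ (hu : u ∈ W l) (hyW : y ∈ W l),
            ((U l).comap (W l).subtype).mkQ ⟨u, hu⟩ =
              ((U l).comap (W l).subtype).mkQ ⟨y, hyW⟩ := by
      intro y hy
      induction hy using Submodule.span_induction with
      | mem yy hyy =>
        by_cases hyU : yy ∈ U l
        · refine ⟨0, Submodule.zero_mem _, fun hu hyW => ?_⟩
          have e1 : ((U l).comap (W l).subtype).mkQ (⟨0, hu⟩ : ↥(W l)) = 0 := by
            rw [Submodule.mkQ_apply, Submodule.Quotient.mk_eq_zero]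
            simpa using (U l).zero_mem
          have e2 : ((U l).comap (W l).subtype).mkQ (⟨yy, hyW⟩ : ↥(W l)) = 0 := by
            rw [Submodule.mkQ_apply, Submodule.Quotient.mk_eq_zero]
            simpa using hyU
          rw [e1, e2]
        · exact ⟨yy, Submodule.subset_span ⟨hyy.1, hyy.2, hyU⟩, fun hu hyW => rfl⟩
      | zero => exact ⟨0, Submodule.zero_mem _, fun hu hyW => rfl⟩
      | add y1 y2 hy1 hy2 ih1 ih2 =>
        obtain ⟨u1, hu1m, hu1e⟩ := ih1
        obtain ⟨u2, hu2m, hu2e⟩ := ih2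
        refine ⟨u1 + u2, add_mem hu1m hu2m, fun hu hyW => ?_⟩
        have hw1 : u1 ∈ W l := hVlW l hu1m
        have hw2 : u2 ∈ W l := hVlW l hu2m
        have hy1W : y1 ∈ W l := hWle hy1
        have hy2W : y2 ∈ W l := hWle hy2
        have e : (⟨u1 + u2, hu⟩ : ↥(W l)) = ⟨u1, hw1⟩ + ⟨u2, hw2⟩ := rfl
        have e' : (⟨y1 + y2, hyW⟩ : ↥(W l)) = ⟨y1, hy1W⟩ + ⟨y2, hy2W⟩ := rfl
        rw [e, e', map_add, map_add, hu1e hw1 hy1W, hu2e hw2 hy2W]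
      | smul a y' hy' ih =>
        obtain ⟨u, hum, hue⟩ := ih
        refine ⟨a • u, Submodule.smul_mem _ a hum, fun hu hyW => ?_⟩
        have hw : u ∈ W l := hVlW l hum
        have hyW' : y' ∈ W l := hWle hy'
        have e : (⟨a • u, hu⟩ : ↥(W l)) = a • (⟨u, hw⟩ : ↥(W l)) := rfl
        have e' : (⟨a • y', hyW⟩ : ↥(W l)) = a • (⟨y', hyW'⟩ : ↥(W l)) := rfl
        rw [e, e', map_smul, map_smul, hue hw hyW']
    obtain ⟨u, hum, hue⟩ := main (z : V)
      (le_span_inter hser b hb hadaptLI (hW l) z.2)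
    exact ⟨u, hum, fun hu => by rw [hue hu z.2]⟩
  -- injectivity inside the section subspace
  have hinjVl : ∀ (l : Λ) (u : V),
      u ∈ span F (ℬ ∩ ((W l : Set V) \ (U l : Set V))) → u ∈ U l → u = 0 := by
    intro l u h1 h2
    have hs1 := support_subset_span b hb h1
    have hs2 := hsupp (hU l) h2
    have hempty : (b.repr u).support = ∅ :=
      Finset.eq_empty_of_forall_notMem fun w hw => (hs1 w hw).2 (hs2 w hw)
    have : b.repr u = 0 := Finsupp.support_eq_empty.1 hempty
    exact b.repr.map_eq_zero_iff.1 this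
  -- existence of good lifts for basis vectors in a section
  have hgex : ∀ (l : Λ) (v : ℬ) (hvW : (v : V) ∈ W l) (hvU : (v : V) ∉ U l),
      ∃ u : V, u ∈ span F (ℬ ∩ ((W l : Set V) \ (U l : Set V))) ∧
        u ∈ jB 𝓛 (v : V) ∧ ∀ (hu : u ∈ W l),
          ((U l).comap (W l).subtype).mkQ ⟨u, hu⟩ =
            (h l) (((U l).comap (W l).subtype).mkQ ⟨(v : V), hvW⟩) -
              ((U l).comap (W l).subtype).mkQ ⟨(v : V), hvW⟩ := by
    intro l v hvW hvU
    have hj : IsJump 𝓛 (jB 𝓛 (v : V)) (jT 𝓛 (v : V)) := isJump_jx hser (hbne v)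
    have hUB : U l ≤ jB 𝓛 (v : V) := le_jB (hU l) hvU
    have hTW : jT 𝓛 (v : V) ≤ W l := jT_le (hW l) hvW
    have hjind := induced_jump hser hj hUB hTW
    have hmemT : ((U l).comap (W l).subtype).mkQ ⟨(v : V), hvW⟩ ∈
        ((jT 𝓛 (v : V)).comap (W l).subtype).map ((U l).comap (W l).subtype).mkQ :=
      Submodule.mem_map_of_mem (by simpa using mem_jT (v : V))
    have hd := hstab l _ _ hjind _ hmemT
    obtain ⟨y, hy, hyE⟩ := hd
    obtain ⟨u, huVl, huE⟩ := hsur l (((U l).comap (W l).subtype).mkQ y)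
    have hu : u ∈ W l := hVlW l huVl
    have h1 : u - (y : V) ∈ U l := by
      have heq : ((U l).comap (W l).subtype).mkQ ⟨u, hu⟩ =
          ((U l).comap (W l).subtype).mkQ y := huE hu
      rw [Submodule.mkQ_apply, Submodule.mkQ_apply] at heq
      have := (Submodule.Quotient.eq _).1 heq
      simpa using this
    have h2 : (y : V) ∈ jB 𝓛 (v : V) := by simpa using hy
    have h3 : u ∈ jB 𝓛 (v : V) := by
      have := add_mem (hUB h1) h2
      simpa using this
    exact ⟨u, huVl, h3, fun hu' => (huE hu').trans hyE⟩
  choose uSel hu1 hu2 hu3 using hgex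
  -- the map on basis vectors
  let gB : ℬ → V := fun v =>
    if hv : ∃ l, (v : V) ∈ W l ∧ (v : V) ∉ U l then
      (v : V) + uSel hv.choose v hv.choose_spec.1 hv.choose_spec.2
    else (v : V)
  let φ : V →ₗ[F] V := b.constr F gB
  have hφb : ∀ v : ℬ, φ ((v : V)) = gB v := fun v => by
    conv_lhs => rw [← hb v]
    exact b.constr_basis F gB v
  have hgB1 : ∀ (v : ℬ) (l : Λ) (hvW : (v : V) ∈ W l) (hvU : (v : V) ∉ U l),
      gB v = (v : V) + uSel l v hvW hvU := by
    intro v l hvW hvU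
    have hex : ∃ m, (v : V) ∈ W m ∧ (v : V) ∉ U m := ⟨l, hvW, hvU⟩
    have hl : hex.choose = l :=
      huniq _ _ _ hex.choose_spec.1 hex.choose_spec.2 hvW hvU
    subst hl
    exact dif_pos hex
  have hgB2 : ∀ v : ℬ, (¬∃ l, (v : V) ∈ W l ∧ (v : V) ∉ U l) → gB v = (v : V) :=
    fun v hv => dif_neg hv
  have hgBsub : ∀ v : ℬ, gB v - (v : V) ∈ jB 𝓛 (v : V) := by
    intro v
    by_cases hv : ∃ l, (v : V) ∈ W l ∧ (v : V) ∉ U l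
    · obtain ⟨l, h1, h2⟩ := hv
      rw [hgB1 v l h1 h2]
      simpa using hu2 l v h1 h2
    · rw [hgB2 v hv]
      simpa using Submodule.zero_mem (jB 𝓛 (v : V))
  -- φ is a stability map
  have hstabφ : ∀ B T : Submodule F V, IsJump 𝓛 B T → ∀ x ∈ T, φ x - x ∈ B := by
    intro B T hj x hxT
    have h1 : φ x = ∑ w ∈ (b.repr x).support, (b.repr x) w • gB w := by
      show (b.constr F) gB x = _
      rw [b.constr_apply, Finsupp.sum]
    have h2 : x = ∑ w ∈ (b.repr x).support, (b.repr x) w • (w : V) := by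
      conv_lhs => rw [← b.linearCombination_repr x]
      rw [Finsupp.linearCombination_apply, Finsupp.sum]
      exact Finset.sum_congr rfl fun w _ => by rw [hb w]
    have hφx : φ x - x =
        ∑ w ∈ (b.repr x).support, (b.repr x) w • (gB w - (w : V)) := by
      calc φ x - x
          = ∑ w ∈ (b.repr x).support,
              ((b.repr x) w • gB w - (b.repr x) w • (w : V)) := by
            rw [Finset.sum_sub_distrib, ← h1, ← h2]
        _ = ∑ w ∈ (b.repr x).support, (b.repr x) w • (gB w - (w : V)) := by
            simp [smul_sub]
    rw [hφx]
    refine Submodule.sum_mem _ ?_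
    intro w hw
    refine Submodule.smul_mem _ _ ?_
    have hwT : (w : V) ∈ T := hsupp hj.2.1 hxT w hw
    have hjw : IsJump 𝓛 (jB 𝓛 (w : V)) (jT 𝓛 (w : V)) := isJump_jx hser (hbne w)
    have hBle : jB 𝓛 (w : V) ≤ B := by
      rcases jump_cmp hser hjw hj with ⟨hB', _⟩ | hle | hle
      · exact hB'.le
      · exact (jB_lt_jT hser (hbne w)).le.trans hle
      · exact absurd (hle hwT) (not_mem_jB hser (hbne w))
    exact hBle (hgBsub w)
  -- injectivity
  have hφinj : Function.Injective φ := by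
    refine (injective_iff_map_eq_zero φ).2 ?_
    intro x hx0
    by_contra hxne
    have h1 : φ x - x ∈ jB 𝓛 x := hstabφ _ _ (isJump_jx hser hxne) x (mem_jT x)
    rw [hx0] at h1
    have : x ∈ jB 𝓛 x := by simpa using Submodule.neg_mem _ h1
    exact not_mem_jB hser hxne this
  -- φ preserves members of the series
  have hpres : ∀ X ∈ 𝓛, ∀ x ∈ X, φ x ∈ X := by
    intro X hX x hx
    by_cases hxne : x = 0
    · subst hxne; simpa using Submodule.zero_mem X
    · have h1 : φ x - x ∈ jB 𝓛 x := hstabφ _ _ (isJump_jx hser hxne) x (mem_jT x)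
      have h2 : jB 𝓛 x ≤ X := ((jB_lt_jT hser hxne).trans_le (jT_le hX hx)).le
      have := add_mem (h2 h1) hx
      simpa using this
  -- φ preserves the section subspaces
  have hφVl : ∀ (l : Λ), ∀ y ∈ span F (ℬ ∩ ((W l : Set V) \ (U l : Set V))),
      φ y ∈ span F (ℬ ∩ ((W l : Set V) \ (U l : Set V))) := by
    intro l y hy
    have hmap : Submodule.map φ (span F (ℬ ∩ ((W l : Set V) \ (U l : Set V)))) ≤
        span F (ℬ ∩ ((W l : Set V) \ (U l : Set V))) := by
      rw [Submodule.map_span, Submodule.span_le]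
      rintro z ⟨w, hw, rfl⟩
      have hwB : w ∈ ℬ := hw.1
      rw [hφb ⟨w, hwB⟩, hgB1 ⟨w, hwB⟩ l hw.2.1 hw.2.2]
      exact Submodule.add_mem _ (Submodule.subset_span hw)
        (hu1 l ⟨w, hwB⟩ hw.2.1 hw.2.2)
    exact hmap (Submodule.mem_map_of_mem hy)
  -- the induced map on the section is h l
  have hcomp : ∀ (l : Λ) (x : V) (hx : x ∈ W l) (hφx : φ x ∈ W l),
      ((U l).comap (W l).subtype).mkQ ⟨φ x, hφx⟩ =
        (h l) (((U l).comap (W l).subtype).mkQ ⟨x, hx⟩) := by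
    intro l
    have hext : ((U l).comap (W l).subtype).mkQ ∘ₗ
        (φ.restrict (p := W l) (q := W l) (fun z hz => hpres _ (hW l) z hz))
        = (h l).toLinearMap ∘ₗ ((U l).comap (W l).subtype).mkQ := by
      apply LinearMap.ext_on (s := {z : ↥(W l) | (z : V) ∈ ℬ})
      · apply Submodule.map_injective_of_injective (Submodule.injective_subtype (W l))
        rw [Submodule.map_span, Submodule.map_top, Submodule.range_subtype]
        have himg : (W l).subtype '' {z : ↥(W l) | (z : V) ∈ ℬ} = ℬ ∩ (W l : Set V) := by
          ext y; constructor
          · rintro ⟨z, hz, rfl⟩; exact ⟨hz, z.2⟩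
          · rintro ⟨hy1, hy2⟩; exact ⟨⟨y, hy2⟩, hy1, rfl⟩
        rw [himg]
        exact le_antisymm (Submodule.span_le.2 fun y hy => hy.2)
          (le_span_inter hser b hb hadaptLI (hW l))
      · intro z hz
        simp only [LinearMap.comp_apply, LinearEquiv.coe_coe]
        rw [LinearMap.restrict_apply]
        by_cases hzU : (z : V) ∈ U l
        · have hφz : φ (z : V) ∈ U l := hpres _ (hU l) _ hzU
          have e1 : ((U l).comap (W l).subtype).mkQ
              (⟨φ (z : V), hpres _ (hW l) _ z.2⟩ : ↥(W l)) = 0 := by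
            rw [Submodule.mkQ_apply, Submodule.Quotient.mk_eq_zero]
            simpa using hφz
          have e2 : ((U l).comap (W l).subtype).mkQ z = 0 := by
            rw [Submodule.mkQ_apply, Submodule.Quotient.mk_eq_zero]
            simpa using hzU
          rw [e1, e2, map_zero]
        · have h1 : φ (z : V) = gB ⟨(z : V), hz⟩ := hφb ⟨(z : V), hz⟩
          have h2 : gB ⟨(z : V), hz⟩ = (z : V) + uSel l ⟨(z : V), hz⟩ z.2 hzU :=
            hgB1 ⟨(z : V), hz⟩ l z.2 hzU
          have huW : uSel l ⟨(z : V), hz⟩ z.2 hzU ∈ W l :=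
            hVlW l (hu1 l ⟨(z : V), hz⟩ z.2 hzU)
          have key : (⟨φ (z : V), hpres _ (hW l) _ z.2⟩ : ↥(W l)) =
              z + ⟨uSel l ⟨(z : V), hz⟩ z.2 hzU, huW⟩ :=
            Subtype.ext (by
              show φ (z : V) = (z : V) + uSel l ⟨(z : V), hz⟩ z.2 hzU
              rw [h1, h2])
          have step1 := congrArg (((U l).comap (W l).subtype).mkQ) key
          rw [map_add, hu3 l ⟨(z : V), hz⟩ z.2 hzU huW] at step1
          have hzz : ((U l).comap (W l).subtype).mkQ
              (⟨((⟨(z : V), hz⟩ : ℬ) : V), z.2⟩ : ↥(W l)) =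
              ((U l).comap (W l).subtype).mkQ z := rfl
          rw [hzz] at step1
          have final : ((U l).comap (W l).subtype).mkQ z +
              ((h l) (((U l).comap (W l).subtype).mkQ z) -
                ((U l).comap (W l).subtype).mkQ z) =
              (h l) (((U l).comap (W l).subtype).mkQ z) := by abel
          exact step1.trans final
    intro x hx hφx
    have hcf := LinearMap.congr_fun hext ⟨x, hx⟩
    simp only [LinearMap.comp_apply, LinearEquiv.coe_coe] at hcf
    rw [LinearMap.restrict_apply] at hcf
    exact hcf
  -- surjectivity
  have hφsurj : Function.Surjective φ := by
    rw [← LinearMap.range_eq_top, eq_top_iff, ← hspan, Submodule.span_le]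
    intro y hy
    show y ∈ LinearMap.range φ
    by_cases hsec : ∃ l, y ∈ W l ∧ y ∉ U l
    · obtain ⟨l, h1, h2⟩ := hsec
      have hyVl : y ∈ span F (ℬ ∩ ((W l : Set V) \ (U l : Set V))) :=
        Submodule.subset_span ⟨hy, h1, h2⟩
      obtain ⟨u, huVl, huE⟩ :=
        hsur l ((h l).symm (((U l).comap (W l).subtype).mkQ ⟨y, h1⟩))
      have huW : u ∈ W l := hVlW l huVl
      have hφu : φ u ∈ span F (ℬ ∩ ((W l : Set V) \ (U l : Set V))) := hφVl l u huVl
      have hφuW : φ u ∈ W l := hVlW l hφu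
      have e1 : ((U l).comap (W l).subtype).mkQ ⟨φ u, hφuW⟩ =
          ((U l).comap (W l).subtype).mkQ ⟨y, h1⟩ := by
        rw [hcomp l u huW hφuW, huE huW, LinearEquiv.apply_symm_apply]
      have e2 : φ u - y ∈ U l := by
        rw [Submodule.mkQ_apply, Submodule.mkQ_apply] at e1
        have := (Submodule.Quotient.eq _).1 e1
        simpa using this
      have e3 : φ u - y ∈ span F (ℬ ∩ ((W l : Set V) \ (U l : Set V))) :=
        Submodule.sub_mem _ hφu hyVl
      exact ⟨u, sub_eq_zero.1 (hinjVl l _ e3 e2)⟩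
    · refine ⟨y, ?_⟩
      have h0 : φ ((⟨y, hy⟩ : ℬ) : V) = gB ⟨y, hy⟩ := hφb ⟨y, hy⟩
      rw [hgB2 ⟨y, hy⟩ (by
        rintro ⟨l, hWl, hUl⟩
        exact hsec ⟨l, hWl, hUl⟩)] at h0
      exact h0
  -- assemble
  refine ⟨LinearEquiv.ofBijective φ ⟨hφinj, hφsurj⟩, ?_, ?_⟩
  · intro B T hj x hx
    show φ x - x ∈ B
    exact hstabφ B T hj x hx
  · intro l
    refine ⟨fun x hx => ?_, fun x hx => ?_, fun x hx => ?_⟩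
    · show φ x ∈ W l; exact hpres _ (hW l) x hx
    · show φ x ∈ U l; exact hpres _ (hU l) x hx
    · have hx' : φ (x : V) ∈ W l := hx
      have hc := hcomp l (x : V) x.2 hx'
      rw [Submodule.mkQ_apply, Submodule.mkQ_apply] at hc
      exact hc.symm
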